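/- The left A-module P = K[[t]] is injective and indecomposable; moreover, the A-submodule of P generated by the constant power series 1 equals the subspace K[t] of polynomials, is a simple left A-module isomorphic to the left ideal Aw, and is essential in P (every nonzero A-submodule of P meets it nontrivially). Hence P is an injective envelope of the simple module Aw; it realizes the module K[[Y]](1 − YX). -/

import Mathlib

noncomputable section

/-- The relation `X * Y = 1` defining the Jacobson algebra. -/
def JacRel (K : Type) [Field K] : FreeAlgebra K (Fin 2) → FreeAlgebra K (Fin 2) → Prop :=
  fun a b => a = FreeAlgebra.ι K (0 : Fin 2) * FreeAlgebra.ι K (1 : Fin 2) ∧ b = 1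

/-- The Jacobson algebra `K⟨X, Y ∣ XY = 1⟩`. -/
abbrev Jac (K : Type) [Field K] := RingQuot (JacRel K)

variable (K : Type) [Field K]

/-- The generator `X`. -/
def Xg : Jac K := RingQuot.mkAlgHom K (JacRel K) (FreeAlgebra.ι K 0)
/-- The generator `Y`. -/
def Yg : Jac K := RingQuot.mkAlgHom K (JacRel K) (FreeAlgebra.ι K 1)

/-- `w = 1 - YX`. -/
def wE : Jac K := 1 - Yg K * Xg K
/-- `c = Y²X`. -/
def cE : Jac K := Yg K ^ 2 * Xg K

/-- A module is indecomposable if it is nonzero and is not the internal direct sum of two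
nonzero submodules. -/
def IsIndecomposableModule (S : Type) [Ring S] (E : Type) [AddCommGroup E] [Module S E] :
    Prop :=
  (∃ x : E, x ≠ 0) ∧ ¬∃ N₁ N₂ : Submodule S E, N₁ ≠ ⊥ ∧ N₂ ≠ ⊥ ∧ IsCompl N₁ N₂

/-- Multiplication by `t` on `K[[t]]`. -/
def psMulX : PowerSeries K →ₗ[K] PowerSeries K := LinearMap.mulLeft K PowerSeries.X

/-- The backward shift `Σ kᵢtⁱ ↦ Σ kᵢ₊₁tⁱ` on `K[[t]]`. -/
def psShift : PowerSeries K →ₗ[K] PowerSeries K where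
  toFun f := PowerSeries.mk fun n => PowerSeries.coeff (R := K) (n + 1) f
  map_add' a b := by
    ext n
    simp
  map_smul' m a := by
    ext n
    simp

theorem psShift_comp_psMulX : psShift K ∘ₗ psMulX K = LinearMap.id := by
  refine LinearMap.ext fun f => ?_
  ext n
  simp [psShift, psMulX, PowerSeries.coeff_succ_X_mul]

/-- The representation of the Jacobson algebra on `K[[t]]`, with `Y` acting as
multiplication by `t` and `X` as the backward shift. -/
def psRep : Jac K →ₐ[K] Module.End K (PowerSeries K) :=
  RingQuot.liftAlgHom K
    ⟨FreeAlgebra.lift K (fun i : Fin 2 => if i = 0 then psShift K else psMulX K), by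
      rintro a b ⟨ha, hb⟩
      subst ha; subst hb
      rw [map_mul, map_one, FreeAlgebra.lift_ι_apply, FreeAlgebra.lift_ι_apply,
        if_pos rfl, if_neg (by decide)]
      exact psShift_comp_psMulX K⟩

/-- The left `A`-module structure on `P = K[[t]]`. -/
instance : Module (Jac K) (PowerSeries K) := Module.compHom _ (psRep K).toRingHom



lemma smul_def' (a : Jac K) (f : PowerSeries K) : a • f = psRep K a f := rfl

lemma Xg_smul (f : PowerSeries K) : Xg K • f = psShift K f := by
  rw [smul_def', Xg, psRep]
  rw [RingQuot.liftAlgHom_mkAlgHom_apply]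
  simp [FreeAlgebra.lift_ι_apply]

lemma Yg_smul (f : PowerSeries K) : Yg K • f = PowerSeries.X * f := by
  rw [smul_def', Yg, psRep]
  rw [RingQuot.liftAlgHom_mkAlgHom_apply]
  simp [FreeAlgebra.lift_ι_apply, psMulX]

lemma algebraMap_smul' (c : K) (f : PowerSeries K) :
    (algebraMap K (Jac K) c) • f = c • f := by
  rw [smul_def', AlgHom.commutes]
  rfl

lemma XY_eq_one : Xg K * Yg K = 1 := by
  have : RingQuot.mkAlgHom K (JacRel K) (FreeAlgebra.ι K (0:Fin 2) * FreeAlgebra.ι K (1:Fin 2))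
      = RingQuot.mkAlgHom K (JacRel K) 1 := RingQuot.mkAlgHom_rel K ⟨rfl, rfl⟩
  rw [map_mul, map_one] at this
  exact this

lemma Xg_mul_wE : Xg K * wE K = 0 := by
  rw [wE, mul_sub, mul_one, ← mul_assoc, XY_eq_one, one_mul, sub_self]

lemma wE_mul_Yg : wE K * Yg K = 0 := by
  rw [wE, sub_mul, one_mul, mul_assoc, XY_eq_one, mul_one, sub_self]

lemma coeff_Xpow_smul (n k : ℕ) (f : PowerSeries K) :
    PowerSeries.coeff (R := K) k (Xg K ^ n • f) = PowerSeries.coeff (R := K) (k + n) f := by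
  induction n generalizing f k with
  | zero => simp
  | succ n ih =>
      have h0 : Xg K ^ (n+1) • f = Xg K ^ n • (Xg K • f) := by
        rw [← mul_smul, ← pow_succ]
      have h2 : k + (n+1) = (k+n) + 1 := by omega
      rw [h0, ih, Xg_smul, h2]
      simp [psShift]

lemma Ypow_smul_one (n : ℕ) : Yg K ^ n • (1 : PowerSeries K) = PowerSeries.X ^ n := by
  induction n with
  | zero => simp
  | succ n ih => rw [pow_succ', mul_smul, ih, Yg_smul, ← pow_succ']

lemma wE_smul (f : PowerSeries K) :
    wE K • f = (PowerSeries.coeff (R := K) 0 f) • (1 : PowerSeries K) := by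
  rw [wE, sub_smul, one_smul, mul_smul, Xg_smul, Yg_smul]
  ext k
  cases k with
  | zero => simp [psShift]
  | succ k => simp [psShift, PowerSeries.coeff_succ_X_mul]

lemma adjoin_XY : Algebra.adjoin K ({Xg K, Yg K} : Set (Jac K)) = ⊤ := by
  rw [eq_top_iff]
  rintro a -
  obtain ⟨x, rfl⟩ := RingQuot.mkAlgHom_surjective K (JacRel K) a
  induction x using FreeAlgebra.induction with
  | grade0 c => rw [AlgHom.commutes]; exact Subalgebra.algebraMap_mem _ c
  | grade1 i =>
      fin_cases i
      · exact Algebra.subset_adjoin (Or.inl rfl)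
      · exact Algebra.subset_adjoin (Or.inr rfl)
  | mul a b ha hb => rw [map_mul]; exact mul_mem ha hb
  | add a b ha hb => rw [map_add]; exact add_mem ha hb

/-- The polynomials as an `A`-submodule of `K[[t]]`. -/
def polySub : Submodule (Jac K) (PowerSeries K) where
  carrier := Set.range (fun q : Polynomial K => (q : PowerSeries K))
  add_mem' := by
    rintro _ _ ⟨q, rfl⟩ ⟨r, rfl⟩
    exact ⟨q + r, by push_cast; ring⟩
  zero_mem' := ⟨0, by push_cast; ring⟩
  smul_mem' := by
    intro a f hf
    have key : ∀ b ∈ Algebra.adjoin K ({Xg K, Yg K} : Set (Jac K)),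
        ∀ g ∈ Set.range (fun q : Polynomial K => (q : PowerSeries K)),
          b • g ∈ Set.range (fun q : Polynomial K => (q : PowerSeries K)) := by
      intro b hb
      induction hb using Algebra.adjoin_induction with
      | mem x hx =>
          rcases hx with h | h
          · subst h
            rintro _ ⟨q, rfl⟩
            refine ⟨q.divX, ?_⟩
            rw [Xg_smul]
            ext n
            simp [psShift, Polynomial.coeff_coe, Polynomial.coeff_divX]
          · subst h
            rintro _ ⟨q, rfl⟩
            refine ⟨Polynomial.X * q, ?_⟩
            rw [Yg_smul]
            show ((Polynomial.X * q : Polynomial K) : PowerSeries K)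
              = PowerSeries.X * (q : PowerSeries K)
            push_cast
            ring
      | algebraMap c =>
          rintro _ ⟨q, rfl⟩
          refine ⟨c • q, ?_⟩
          rw [algebraMap_smul']
          show ((c • q : Polynomial K) : PowerSeries K) = c • (q : PowerSeries K)
          ext n
          simp [Polynomial.coeff_coe]
      | add x y hx hy ihx ihy =>
          rintro g hg
          rcases ihx g hg with ⟨q, hq⟩
          rcases ihy g hg with ⟨r, hr⟩
          refine ⟨q + r, ?_⟩
          rw [add_smul, ← hq, ← hr]
          show ((q + r : Polynomial K) : PowerSeries K)
            = ((q : Polynomial K) : PowerSeries K) + ((r : Polynomial K) : PowerSeries K)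
          push_cast
          ring
      | mul x y hx hy ihx ihy =>
          rintro g hg
          rw [mul_smul]
          exact ihx _ (ihy g hg)
    exact key a (by rw [adjoin_XY]; trivial) f hf

lemma span_one_eq : Submodule.span (Jac K) {(1 : PowerSeries K)} = polySub K := by
  apply le_antisymm
  · rw [Submodule.span_le]
    rintro _ rfl
    exact ⟨1, by push_cast; ring⟩
  · rintro _ ⟨q, rfl⟩
    have : ∀ q : Polynomial K,
        ((q : PowerSeries K)) ∈ Submodule.span (Jac K) {(1 : PowerSeries K)} := by
      intro q
      induction q using Polynomial.induction_on' with
      | add p r hp hr =>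
          rw [show (((p + r : Polynomial K)) : PowerSeries K)
            = (p : PowerSeries K) + (r : PowerSeries K) by push_cast; ring]
          exact Submodule.add_mem _ hp hr
      | monomial n c =>
          have h1 : ((Polynomial.monomial n c : Polynomial K) : PowerSeries K)
              = (algebraMap K (Jac K) c * Yg K ^ n) • (1 : PowerSeries K) := by
            rw [mul_smul, Ypow_smul_one, algebraMap_smul']
            ext k
            simp [Polynomial.coeff_coe, Polynomial.coeff_monomial, PowerSeries.coeff_X_pow,
              PowerSeries.coeff_monomial]
          rw [h1]
          exact Submodule.smul_mem _ _ (Submodule.mem_span_singleton_self _)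
    exact this q

/-- Every nonzero submodule contains the span of 1. -/
lemma span_one_le (N : Submodule (Jac K) (PowerSeries K)) (hN : N ≠ ⊥) :
    Submodule.span (Jac K) {(1 : PowerSeries K)} ≤ N := by
  obtain ⟨f, hfN, hf0⟩ := Submodule.exists_mem_ne_zero_of_ne_bot hN
  have : ∃ n, PowerSeries.coeff (R := K) n f ≠ 0 := by
    by_contra h
    push_neg at h
    exact hf0 (PowerSeries.ext h)
  obtain ⟨n, hn⟩ := this
  have h1 : (wE K * Xg K ^ n) • f = (PowerSeries.coeff (R := K) n f) • (1 : PowerSeries K) := by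
    rw [mul_smul, wE_smul, coeff_Xpow_smul, zero_add]
  have h2 : (PowerSeries.coeff (R := K) n f) • (1 : PowerSeries K) ∈ N := h1 ▸ N.smul_mem _ hfN
  have h3 : (1 : PowerSeries K) ∈ N := by
    have := N.smul_mem (algebraMap K (Jac K) (PowerSeries.coeff (R := K) n f)⁻¹) h2
    rwa [algebraMap_smul', smul_smul, inv_mul_cancel₀ hn, one_smul] at this
  rw [Submodule.span_le, Set.singleton_subset_iff]
  exact h3

lemma atom_span_one : IsAtom (Submodule.span (Jac K) {(1 : PowerSeries K)}) := by
  constructor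
  · intro h
    have : (1 : PowerSeries K) ∈ (⊥ : Submodule (Jac K) (PowerSeries K)) :=
      h ▸ Submodule.mem_span_singleton_self _
    simp at this
  · intro b hb
    by_contra hb0
    exact absurd (span_one_le K b hb0) (not_le_of_gt hb)

/-- The `K`-span of `{Yⁱw}`. -/
def Sk : Submodule K (Jac K) := Submodule.span K (Set.range fun i : ℕ => Yg K ^ i * wE K)

lemma mul_mem_Sk : ∀ a : Jac K, ∀ s ∈ Sk K, a * s ∈ Sk K := by
  have key : ∀ a ∈ Algebra.adjoin K ({Xg K, Yg K} : Set (Jac K)),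
      ∀ s ∈ Sk K, a * s ∈ Sk K := by
    intro a ha
    induction ha using Algebra.adjoin_induction with
    | mem x hx =>
        intro s hs
        induction hs using Submodule.span_induction with
        | mem s hs =>
            obtain ⟨i, rfl⟩ := hs
            rcases hx with h | h
            · subst h
              cases i with
              | zero =>
                  show Xg K * (Yg K ^ 0 * wE K) ∈ Sk K
                  simp only [pow_zero, one_mul, Xg_mul_wE]
                  exact Submodule.zero_mem _
              | succ i =>
                  show Xg K * (Yg K ^ (i + 1) * wE K) ∈ Sk K
                  rw [pow_succ', mul_assoc, ← mul_assoc (Xg K), XY_eq_one, one_mul]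
                  exact Submodule.subset_span ⟨i, rfl⟩
            · subst h
              show Yg K * (Yg K ^ i * wE K) ∈ Sk K
              rw [← mul_assoc, ← pow_succ']
              exact Submodule.subset_span ⟨i + 1, rfl⟩
        | zero => rw [mul_zero]; exact Submodule.zero_mem _
        | add u v hu hv ihu ihv => rw [mul_add]; exact Submodule.add_mem _ ihu ihv
        | smul c u hu ihu => rw [mul_smul_comm]; exact Submodule.smul_mem _ _ ihu
    | algebraMap c =>
        intro s hs
        rw [← Algebra.smul_def]
        exact Submodule.smul_mem _ _ hs
    | add x y hx hy ihx ihy =>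
        intro s hs
        rw [add_mul]
        exact Submodule.add_mem _ (ihx s hs) (ihy s hs)
    | mul x y hx hy ihx ihy =>
        intro s hs
        rw [mul_assoc]
        exact ihx _ (ihy s hs)
  intro a
  exact key a (by rw [adjoin_XY]; trivial)

lemma w_smul_one : wE K • (1 : PowerSeries K) = 1 := by
  rw [wE_smul]; simp

lemma ksmul_smul (k : K) (v : Jac K) (p : PowerSeries K) :
    (k • v) • p = k • (v • p) := by
  rw [Algebra.smul_def, mul_smul, algebraMap_smul']

lemma span_w_eval_inj : ∀ u ∈ Submodule.span (Jac K) {wE K},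
    u • (1 : PowerSeries K) = 0 → u = 0 := by
  intro u hu h0
  obtain ⟨a, rfl⟩ := Submodule.mem_span_singleton.mp hu
  have hmem : a • wE K ∈ Sk K := by
    have : wE K ∈ Sk K := Submodule.subset_span ⟨0, by simp⟩
    simpa [smul_eq_mul] using mul_mem_Sk K a _ this
  obtain ⟨c, hc⟩ := Finsupp.mem_span_range_iff_exists_finsupp.mp hmem
  have heval : (a • wE K) • (1 : PowerSeries K)
      = c.sum fun i k => k • PowerSeries.X ^ i := by
    rw [← hc, Finsupp.sum, Finsupp.sum, Finset.sum_smul]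
    refine Finset.sum_congr rfl fun i _ => ?_
    rw [ksmul_smul, mul_smul, w_smul_one, Ypow_smul_one]
  have hcoeff : ∀ n, c n = 0 := by
    intro n
    have := congrArg (PowerSeries.coeff (R := K) n) (heval ▸ h0)
    rw [map_finsuppSum] at this
    simp only [LinearMap.map_smul, PowerSeries.coeff_X_pow, smul_eq_mul] at this
    rw [Finsupp.sum_eq_single n (fun b _ hbn => by simp [if_neg (Ne.symm hbn)])
      (by simp)] at this
    simpa using this
  have : c = 0 := Finsupp.ext hcoeff
  rw [← hc, this, Finsupp.sum_zero_index]

/-- Evaluation at `1` restricted to `Aw`. -/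
def evalW : (Submodule.span (Jac K) {wE K}) →ₗ[Jac K] PowerSeries K :=
  (LinearMap.toSpanSingleton (Jac K) (PowerSeries K) 1).comp
    (Submodule.span (Jac K) {wE K}).subtype

lemma evalW_inj : Function.Injective (evalW K) := by
  intro a b hab
  have h1 : (a : Jac K) • (1 : PowerSeries K) = (b : Jac K) • (1 : PowerSeries K) := hab
  have h2 : ((a : Jac K) - (b : Jac K)) • (1 : PowerSeries K) = 0 := by
    rw [sub_smul, h1, sub_self]
  have h3 := span_w_eval_inj K _ (Submodule.sub_mem _ a.2 b.2) h2
  exact Subtype.ext (sub_eq_zero.mp h3)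

lemma evalW_range : LinearMap.range (evalW K)
    = Submodule.span (Jac K) {(1 : PowerSeries K)} := by
  rw [evalW, LinearMap.range_comp, Submodule.range_subtype, Submodule.map_span]
  congr 1
  rw [Set.image_singleton]
  congr 1
  exact w_smul_one K

lemma span_iso : Nonempty ((Submodule.span (Jac K) {(1 : PowerSeries K)}) ≃ₗ[Jac K]
    (Submodule.span (Jac K) {wE K})) := by
  refine ⟨((LinearEquiv.ofInjective (evalW K) (evalW_inj K)).trans
    (LinearEquiv.ofEq _ _ (evalW_range K))).symm⟩

theorem ps_injective : Module.Injective (Jac K) (PowerSeries K) := by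
  constructor
  intro M N _ _ _ _ f hf g
  letI : Module K M := Module.compHom M (algebraMap K (Jac K))
  letI : Module K N := Module.compHom N (algebraMap K (Jac K))
  have hsM : ∀ (c : K) (m : M), c • m = (algebraMap K (Jac K) c) • m := fun _ _ => rfl
  have hsN : ∀ (c : K) (n : N), c • n = (algebraMap K (Jac K) c) • n := fun _ _ => rfl
  -- the functional β = coeff₀ ∘ g
  set β : M →ₗ[K] K :=
    { toFun := fun m => PowerSeries.coeff (R := K) 0 (g m)
      map_add' := fun m m' => by
        show PowerSeries.coeff (R := K) 0 (g (m + m'))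
          = PowerSeries.coeff (R := K) 0 (g m) + PowerSeries.coeff (R := K) 0 (g m')
        rw [map_add, map_add]
      map_smul' := fun c m => by
        show PowerSeries.coeff (R := K) 0 (g (c • m)) = c • PowerSeries.coeff (R := K) 0 (g m)
        rw [hsM, g.map_smul, algebraMap_smul', map_smul] } with hβ
  set fK : M →ₗ[K] N :=
    { toFun := f
      map_add' := f.map_add
      map_smul' := fun c m => by
        show f (c • m) = c • f m
        rw [hsM, hsN, f.map_smul] } with hfK
  set YN : N →ₗ[K] N :=
    { toFun := fun n => Yg K • n
      map_add' := fun n n' => smul_add _ _ _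
      map_smul' := fun c n => by
        show Yg K • (c • n) = c • (Yg K • n)
        rw [hsN c n, hsN c (Yg K • n), ← mul_smul, ← mul_smul, Algebra.commutes] } with hYN
  set F : M × N →ₗ[K] N := fK.coprod YN with hF
  set γ : (M × N) →ₗ[K] K := β.comp (LinearMap.fst K M N) with hγ
  have hker : LinearMap.ker F ≤ LinearMap.ker γ := by
    rintro ⟨m, n⟩ hmn
    rw [LinearMap.mem_ker] at hmn ⊢
    have hmn' : f m + Yg K • n = 0 := hmn
    have h1 : wE K • (f m) = 0 := by
      have : f m = -(Yg K • n) := by rw [eq_neg_iff_add_eq_zero]; exact hmn'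
      rw [this, smul_neg, ← mul_smul, wE_mul_Yg, zero_smul, neg_zero]
    have h3 : wE K • m = 0 := by
      apply hf
      rw [f.map_smul, h1, map_zero]
    have h4 : m = Yg K • (Xg K • m) := by
      have h5 : (1 : Jac K) • m - (Yg K * Xg K) • m = 0 := by
        rw [← sub_smul]; exact h3
      rw [← mul_smul]
      have h6 := sub_eq_zero.mp h5
      rwa [one_smul] at h6
    show β m = 0
    rw [hβ]
    show PowerSeries.coeff (R := K) 0 (g m) = 0
    rw [h4, g.map_smul, g.map_smul, Yg_smul]
    simp [PowerSeries.coeff_zero_eq_constantCoeff, map_mul]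
  set β₁ : (LinearMap.range F) →ₗ[K] K :=
    ((LinearMap.ker F).liftQ γ hker).comp (F.quotKerEquivRange).symm.toLinearMap with hβ₁
  have hβ₁app : ∀ (x : M × N) (hx : F x ∈ LinearMap.range F), β₁ ⟨F x, hx⟩ = γ x := by
    intro x hx
    rw [hβ₁]
    have : (F.quotKerEquivRange).symm ⟨F x, hx⟩ = Submodule.Quotient.mk x := by
      rw [LinearEquiv.symm_apply_eq]
      exact Subtype.ext (LinearMap.quotKerEquivRange_apply_mk F x).symm
    simp only [LinearMap.comp_apply, LinearEquiv.coe_coe, this, Submodule.liftQ_apply]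
  obtain ⟨βN, hβN⟩ := LinearMap.exists_extend β₁
  have hβNval : ∀ (x : M × N) (hx : F x ∈ LinearMap.range F), βN (F x) = γ x := by
    intro x hx
    have := congrArg (fun φ => φ ⟨F x, hx⟩) hβN
    simp only [LinearMap.comp_apply, Submodule.coe_subtype] at this
    rw [this, hβ₁app]
  have hβf : ∀ m : M, βN (f m) = PowerSeries.coeff (R := K) 0 (g m) := by
    intro m
    have h0 : F (m, 0) = f m := by
      show fK m + YN 0 = f m
      rw [map_zero, add_zero]; rfl
    have := hβNval (m, 0) ⟨(m, 0), rfl⟩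
    rw [h0] at this
    exact this
  have hβY : ∀ n : N, βN (Yg K • n) = 0 := by
    intro n
    have h0 : F (0, n) = Yg K • n := by
      show fK 0 + YN n = Yg K • n
      rw [map_zero, zero_add]; rfl
    have := hβNval (0, n) ⟨(0, n), rfl⟩
    rw [h0] at this
    rw [this]
    show β 0 = 0
    exact map_zero β
  -- the candidate extension
  set hfun : N → PowerSeries K := fun n => PowerSeries.mk fun j => βN (Xg K ^ j • n)
    with hhfun
  have hadd : ∀ n n', hfun (n + n') = hfun n + hfun n' := by
    intro n n'
    ext j
    simp [hhfun, smul_add]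
  have hXsm : ∀ n, hfun (Xg K • n) = Xg K • hfun n := by
    intro n
    ext j
    rw [Xg_smul]
    simp only [hhfun, PowerSeries.coeff_mk, psShift, LinearMap.coe_mk, AddHom.coe_mk]
    rw [← mul_smul, ← pow_succ]
  have hYsm : ∀ n, hfun (Yg K • n) = Yg K • hfun n := by
    intro n
    ext j
    rw [Yg_smul]
    cases j with
    | zero =>
        simp only [hhfun, PowerSeries.coeff_mk, pow_zero, one_smul]
        rw [hβY]
        simp [PowerSeries.coeff_zero_eq_constantCoeff, map_mul]
    | succ j =>
        rw [PowerSeries.coeff_succ_X_mul]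
        simp only [hhfun, PowerSeries.coeff_mk]
        rw [← mul_smul, pow_succ, mul_assoc, XY_eq_one, mul_one]
  have halg : ∀ (c : K) (n : N), hfun ((algebraMap K (Jac K) c) • n)
      = (algebraMap K (Jac K) c) • hfun n := by
    intro c n
    rw [algebraMap_smul']
    ext j
    simp only [hhfun, PowerSeries.coeff_mk, map_smul, smul_eq_mul]
    rw [← mul_smul, ← Algebra.commutes, mul_smul, ← hsN]
    rw [map_smul, smul_eq_mul]
  have hT : ∀ (a : Jac K) (n : N), hfun (a • n) = a • hfun n := by
    have key : ∀ a ∈ Algebra.adjoin K ({Xg K, Yg K} : Set (Jac K)),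
        ∀ n : N, hfun (a • n) = a • hfun n := by
      intro a ha
      induction ha using Algebra.adjoin_induction with
      | mem x hx =>
          rcases hx with h | h
          · subst h; exact hXsm
          · subst h; exact hYsm
      | algebraMap c => exact halg c
      | add x y hx hy ihx ihy =>
          intro n
          rw [add_smul, add_smul, hadd, ihx, ihy]
      | mul x y hx hy ihx ihy =>
          intro n
          rw [mul_smul, mul_smul, ihx, ihy]
    intro a
    exact key a (by rw [adjoin_XY]; trivial)
  refine ⟨{ toFun := hfun, map_add' := hadd, map_smul' := fun a n => hT a n }, ?_⟩
  intro m
  ext j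
  show PowerSeries.coeff (R := K) j (hfun (f m)) = PowerSeries.coeff (R := K) j (g m)
  simp only [hhfun, PowerSeries.coeff_mk]
  rw [← f.map_smul, hβf, g.map_smul, coeff_Xpow_smul, zero_add]

/-- `P = K[[t]]` is an indecomposable injective left `A`-module; the `A`-submodule
generated by `1` equals the subspace `K[t]` of polynomials, is a simple module isomorphic
to the left ideal `Aw`, and is essential in `P`.  Hence `P` is an injective envelope of
the simple module `Aw` (it realizes `K[[Y]](1 − YX)`). -/
theorem stmt18 :
    Module.Injective (Jac K) (PowerSeries K) ∧
    IsIndecomposableModule (Jac K) (PowerSeries K) ∧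
    (Submodule.span (Jac K) {(1 : PowerSeries K)} : Set (PowerSeries K)) =
      Set.range (fun q : Polynomial K => (q : PowerSeries K)) ∧
    IsSimpleModule (Jac K) (Submodule.span (Jac K) {(1 : PowerSeries K)}) ∧
    Nonempty ((Submodule.span (Jac K) {(1 : PowerSeries K)}) ≃ₗ[Jac K]
      (Submodule.span (Jac K) {wE K})) ∧
    (∀ N : Submodule (Jac K) (PowerSeries K), N ≠ ⊥ →
      N ⊓ Submodule.span (Jac K) {(1 : PowerSeries K)} ≠ ⊥) := by
  have hatom := atom_span_one K
  refine ⟨ps_injective K, ⟨⟨1, one_ne_zero⟩, ?_⟩, ?_, isSimpleModule_iff_isAtom.mpr hatom,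
    span_iso K, ?_⟩
  · rintro ⟨N₁, N₂, h1, h2, hc⟩
    have l1 := span_one_le K N₁ h1
    have l2 := span_one_le K N₂ h2
    have hle : Submodule.span (Jac K) {(1 : PowerSeries K)} ≤ N₁ ⊓ N₂ := le_inf l1 l2
    rw [hc.inf_eq_bot] at hle
    exact hatom.1 (le_bot_iff.mp hle)
  · rw [span_one_eq]
    rfl
  · intro N hN
    rw [inf_eq_right.mpr (span_one_le K N hN)]
    exact hatom.1
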